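/- Let G ~ G_{n,p,d} be any d-dependent random graph distribution on n ≥ 2 vertices. Then the probability that G is not connected is at most Σ_{a=1}^{⌊n/2⌋} C(n,a)·(1−p)^{⌈a(n−a)/(d+1)⌉}. -/

import Mathlib

open MeasureTheory ProbabilityTheory Filter

abbrev EdgeIdx (n : ℕ) := {e : Sym2 (Fin n) // ¬ e.IsDiag}

structure DepRandomGraph (n : ℕ) (p : ℝ) (d : ℕ) where
  Ω : Type
  m : MeasurableSpace Ω
  μ : @MeasureTheory.Measure Ω m
  isProb : @MeasureTheory.IsProbabilityMeasure Ω m μ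
  X : EdgeIdx n → Ω → Bool
  meas : ∀ e, @Measurable Ω Bool m ⊤ (X e)
  probX : ∀ e, μ {ω | X e ω = true} = ENNReal.ofReal p
  D : SimpleGraph (EdgeIdx n)
  degBound : ∀ e, (D.neighborSet e).ncard ≤ d
  indep : ∀ e, @ProbabilityTheory.Indep Ω
      (MeasurableSpace.comap (X e) ⊤)
      (⨆ f ∈ {f : EdgeIdx n | f ≠ e ∧ ¬ D.Adj e f}, MeasurableSpace.comap (X f) ⊤)
      m μ

attribute [instance] DepRandomGraph.m DepRandomGraph.isProb

def DepRandomGraph.graph {n : ℕ} {p : ℝ} {d : ℕ} (G : DepRandomGraph n p d) (ω : G.Ω) :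
    SimpleGraph (Fin n) :=
  SimpleGraph.fromEdgeSet {e : Sym2 (Fin n) | ∃ h : ¬ e.IsDiag, G.X ⟨e, h⟩ ω = true}

noncomputable def DepRandomGraph.deg {n : ℕ} {p : ℝ} {d : ℕ} (G : DepRandomGraph n p d)
    (ω : G.Ω) (v : Fin n) : ℕ :=
  {u | (G.graph ω).Adj v u}.ncard

noncomputable def DepRandomGraph.eAB {n : ℕ} {p : ℝ} {d : ℕ} (G : DepRandomGraph n p d)
    (ω : G.Ω) (A B : Finset (Fin n)) : ℕ :=
  {q : Fin n × Fin n | q.1 ∈ A ∧ q.2 ∈ B ∧ (G.graph ω).Adj q.1 q.2}.ncard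

def ContainsCopy {n : ℕ} {α : Type*} (G' : SimpleGraph (Fin n)) (H : SimpleGraph α) : Prop :=
  ∃ f : α → Fin n, Function.Injective f ∧ ∀ u v, H.Adj u v → G'.Adj (f u) (f v)

/-- The number of vertices covered by a finite set of edges. -/
noncomputable def edgeVertCount {α : Type*} (Γ : Finset (Sym2 α)) : ℕ :=
  {v : α | ∃ e ∈ Γ, v ∈ e}.ncard

/-- The edge cover number of a finite set of edges: the minimum size of a subset `A ⊆ Γ`
such that every edge of `Γ` shares an endpoint with some edge of `A`. -/
noncomputable def coverNum {α : Type*} (Γ : Finset (Sym2 α)) : ℕ :=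
  sInf {k : ℕ | ∃ A ⊆ Γ, A.card = k ∧ ∀ e ∈ Γ, ∃ a ∈ A, ∃ v : α, v ∈ e ∧ v ∈ a}


/-- Greedy independent set in bounded-degree graph. -/
lemma indep_subset_exists {V : Type*} [Fintype V] (D : SimpleGraph V) (d : ℕ)
    (hdeg : ∀ v, (D.neighborSet v).ncard ≤ d) (E : Finset V) :
    ∃ S ⊆ E, (∀ a ∈ S, ∀ b ∈ S, a ≠ b → ¬ D.Adj a b) ∧ E.card ≤ S.card * (d + 1) := by
  classical
  induction E using Finset.strongInduction with
  | _ E ih =>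
    rcases E.eq_empty_or_nonempty with rfl | ⟨e, he⟩
    · exact ⟨∅, by simp, by simp, by simp⟩
    · set N : Finset V := E.filter (fun b => b = e ∨ D.Adj e b) with hN
      have heN : e ∈ N := by simp [hN, he]
      have hNE : N ⊆ E := Finset.filter_subset _ _
      have hNcard : N.card ≤ d + 1 := by
        have hsub : N ⊆ insert e (D.neighborSet e).toFinset := by
          intro b hb
          rcases (Finset.mem_filter.1 hb).2 with rfl | hadj
          · exact Finset.mem_insert_self _ _
          · exact Finset.mem_insert_of_mem (by simpa using hadj)
        calc N.card ≤ (insert e (D.neighborSet e).toFinset).card := Finset.card_le_card hsub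
          _ ≤ (D.neighborSet e).toFinset.card + 1 := Finset.card_insert_le _ _
          _ ≤ d + 1 := by
              have := hdeg e
              rw [Set.ncard_eq_toFinset_card'] at this
              omega
      have hssub : E \ N ⊂ E := by
        refine Finset.sdiff_ssubset ?_ ⟨e, heN⟩
        exact hNE
      obtain ⟨S, hSE', hind, hcard⟩ := ih (E \ N) hssub
      have heS : e ∉ S := fun h => by
        have := hSE' h; simp [Finset.mem_sdiff] at this; exact this.2 heN
      have hnotadj : ∀ b ∈ S, ¬ D.Adj e b := by
        intro b hb hadj
        have := hSE' hb
        rw [Finset.mem_sdiff] at this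
        exact this.2 (Finset.mem_filter.2 ⟨this.1, Or.inr hadj⟩)
      refine ⟨insert e S, ?_, ?_, ?_⟩
      · intro b hb
        rcases Finset.mem_insert.1 hb with rfl | hb
        · exact he
        · exact (Finset.sdiff_subset) (hSE' hb)
      · intro a ha b hb hab hadj
        rcases Finset.mem_insert.1 ha with ha' | ha'
        · rcases Finset.mem_insert.1 hb with hb' | hb'
          · exact hab (ha'.trans hb'.symm)
          · exact hnotadj b hb' (ha' ▸ hadj)
        · rcases Finset.mem_insert.1 hb with hb' | hb'
          · exact hnotadj a ha' (hb' ▸ hadj.symm)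
          · exact hind a ha' b hb' hab hadj
      · have h1 : (E \ N).card = E.card - N.card := Finset.card_sdiff_of_subset hNE
        rw [Finset.card_insert_of_notMem heS]
        have : E.card ≤ (E \ N).card + (d + 1) := by omega
        calc E.card ≤ S.card * (d + 1) + (d + 1) := by omega
          _ = (S.card + 1) * (d + 1) := by ring

/-- Cut set from disconnectedness. -/
lemma exists_cut {n : ℕ} (hn : 2 ≤ n) (H : SimpleGraph (Fin n)) (h : ¬ H.Connected) :
    ∃ A : Finset (Fin n), 1 ≤ A.card ∧ A.card ≤ n / 2 ∧
      ∀ u ∈ A, ∀ v, v ∉ A → ¬ H.Adj u v := by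
  classical
  have hpos : 0 < n := by omega
  set v₀ : Fin n := ⟨0, hpos⟩
  set A₀ : Finset (Fin n) := Finset.univ.filter (fun u => H.Reachable v₀ u) with hA₀
  have hv₀ : v₀ ∈ A₀ := by simp [hA₀]
  have hclosed : ∀ u ∈ A₀, ∀ v, H.Adj u v → v ∈ A₀ := by
    intro u hu v hadj
    simp only [hA₀, Finset.mem_filter, Finset.mem_univ, true_and] at hu ⊢
    exact hu.trans hadj.reachable
  have hne : A₀ ≠ Finset.univ := by
    intro heq
    apply h
    rw [SimpleGraph.connected_iff]
    refine ⟨fun u v => ?_, ⟨v₀⟩⟩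
    have hu : u ∈ A₀ := heq ▸ Finset.mem_univ u
    have hv : v ∈ A₀ := heq ▸ Finset.mem_univ v
    simp only [hA₀, Finset.mem_filter, Finset.mem_univ, true_and] at hu hv
    exact hu.symm.trans hv
  have hcardlt : A₀.card < n := by
    have h1 : A₀.card ≤ n := by simpa using Finset.card_le_univ A₀
    rcases lt_or_eq_of_le h1 with h2 | h2
    · exact h2
    · exact absurd (Finset.eq_univ_of_card A₀ (by simpa using h2)) hne
  by_cases hc : A₀.card ≤ n / 2
  · refine ⟨A₀, Finset.card_pos.2 ⟨v₀, hv₀⟩, hc, ?_⟩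
    intro u hu v hv hadj
    exact hv (hclosed u hu v hadj)
  · refine ⟨A₀ᶜ, ?_, ?_, ?_⟩
    · rw [Finset.card_compl]
      simp only [Fintype.card_fin]
      omega
    · rw [Finset.card_compl]
      simp only [Fintype.card_fin]
      omega
    · intro u hu v hv hadj
      rw [Finset.mem_compl] at hu
      rw [Finset.mem_compl, not_not] at hv
      exact hu (hclosed v hv u hadj.symm)

lemma prod_indep {n : ℕ} {p : ℝ} {d : ℕ} (G : DepRandomGraph n p d) :
    ∀ (S : Finset (EdgeIdx n)), (∀ a ∈ S, ∀ b ∈ S, a ≠ b → ¬ G.D.Adj a b) →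
      G.μ (⋂ e ∈ (S : Set (EdgeIdx n)), {ω | G.X e ω = false}) =
        ∏ e ∈ S, G.μ {ω | G.X e ω = false} := by
  classical
  intro S
  induction S using Finset.induction with
  | empty => intro _; simp
  | @insert e S heS ih =>
    intro hind
    have hA : MeasurableSet[MeasurableSpace.comap (G.X e) ⊤] {ω | G.X e ω = false} :=
      ⟨{false}, trivial, rfl⟩
    have hB : MeasurableSet[⨆ f ∈ {f : EdgeIdx n | f ≠ e ∧ ¬ G.D.Adj e f},
        MeasurableSpace.comap (G.X f) ⊤] (⋂ f ∈ (S : Set (EdgeIdx n)), {ω | G.X f ω = false}) := by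
      refine MeasurableSet.biInter S.countable_toSet ?_
      intro f hf
      have hf' : f ∈ {f : EdgeIdx n | f ≠ e ∧ ¬ G.D.Adj e f} := by
        refine ⟨fun h => heS (h ▸ hf), ?_⟩
        exact hind e (Finset.mem_insert_self _ _) f (Finset.mem_insert_of_mem hf)
          (fun h => heS (h ▸ hf))
      have hle : MeasurableSpace.comap (G.X f) ⊤ ≤
          ⨆ g ∈ {f : EdgeIdx n | f ≠ e ∧ ¬ G.D.Adj e f}, MeasurableSpace.comap (G.X g) ⊤ :=
        le_iSup₂ (f := fun g _ => MeasurableSpace.comap (G.X g) ⊤) f hf'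
      exact hle _ ⟨{false}, trivial, rfl⟩
    have hmul := ((G.indep e).indepSet_of_measurableSet hA hB).measure_inter_eq_mul
    have hrest : ∀ a ∈ S, ∀ b ∈ S, a ≠ b → ¬ G.D.Adj a b := fun a ha b hb =>
      hind a (Finset.mem_insert_of_mem ha) b (Finset.mem_insert_of_mem hb)
    rw [Finset.coe_insert, Set.biInter_insert, hmul, ih hrest,
      Finset.prod_insert heS]

lemma perA {n : ℕ} {p : ℝ} {d : ℕ} (G : DepRandomGraph n p d) (hp1 : p ≤ 1)
    (A : Finset (Fin n)) :
    G.μ {ω | ∀ u ∈ A, ∀ v, v ∉ A → ¬ (G.graph ω).Adj u v} ≤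
      ENNReal.ofReal ((1 - p) ^ ⌈((A.card * (n - A.card) : ℕ) : ℝ) / ((d : ℝ) + 1)⌉₊) := by
  classical
  have h1p : (0:ℝ) ≤ 1 - p := by linarith
  set t : ℕ := ⌈((A.card * (n - A.card) : ℕ) : ℝ) / ((d : ℝ) + 1)⌉₊ with ht
  have hmap : ∀ q ∈ A ×ˢ Aᶜ, ¬ (s(q.1, q.2) : Sym2 (Fin n)).IsDiag := by
    intro q hq
    rw [Finset.mem_product, Finset.mem_compl] at hq
    rw [Sym2.mk_isDiag_iff]
    intro h; exact hq.2 (h ▸ hq.1)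
  set EA : Finset (EdgeIdx n) :=
    (A ×ˢ Aᶜ).attach.image
      (fun q => (⟨s(q.1.1, q.1.2), hmap q.1 q.2⟩ : EdgeIdx n)) with hEA
  have hmem : ∀ e ∈ EA, ∃ u ∈ A, ∃ v ∈ Aᶜ, e.1 = s(u, v) := by
    intro e he
    rw [hEA, Finset.mem_image] at he
    obtain ⟨⟨⟨u, v⟩, hq⟩, _, rfl⟩ := he
    rw [Finset.mem_product] at hq
    exact ⟨u, hq.1, v, hq.2, rfl⟩
  have hEAcard : EA.card = A.card * (n - A.card) := by
    rw [hEA, Finset.card_image_of_injective _ ?_, Finset.card_attach,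
      Finset.card_product, Finset.card_compl, Fintype.card_fin]
    rintro ⟨⟨u, v⟩, hq⟩ ⟨⟨u', v'⟩, hq'⟩ h
    rw [Subtype.ext_iff] at h
    simp only at h
    rw [Sym2.eq_iff] at h
    rw [Finset.mem_product, Finset.mem_compl] at hq hq'
    rcases h with ⟨rfl, rfl⟩ | ⟨rfl, rfl⟩
    · rfl
    · exact absurd hq.1 hq'.2
  obtain ⟨S, hSE, hSind, hScard⟩ := indep_subset_exists G.D d G.degBound EA
  have htle : t ≤ S.card := by
    rw [ht, Nat.ceil_le, div_le_iff₀ (by positivity)]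
    have h2 : A.card * (n - A.card) ≤ S.card * (d + 1) := hEAcard ▸ hScard
    calc ((A.card * (n - A.card) : ℕ) : ℝ) ≤ ((S.card * (d + 1) : ℕ) : ℝ) := by exact_mod_cast h2
      _ = (S.card : ℝ) * ((d : ℝ) + 1) := by push_cast; ring
  obtain ⟨S', hS'S, hS'card⟩ := Finset.exists_subset_card_eq (s := S) htle
  have hfalse : ∀ e : EdgeIdx n, {ω | G.X e ω = false} = {ω | G.X e ω = true}ᶜ := by
    intro e; ext ω; cases h : G.X e ω <;> simp [h]
  have hμfalse : ∀ e : EdgeIdx n, G.μ {ω | G.X e ω = false} = 1 - ENNReal.ofReal p := by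
    intro e
    have hms : MeasurableSet {ω | G.X e ω = true} := G.meas e (show MeasurableSet[⊤] {true} from trivial)
    rw [hfalse e, prob_compl_eq_one_sub hms, G.probX e]
  have hsub : {ω | ∀ u ∈ A, ∀ v, v ∉ A → ¬ (G.graph ω).Adj u v} ⊆
      ⋂ e ∈ (S' : Set (EdgeIdx n)), {ω | G.X e ω = false} := by
    intro ω hω
    simp only [Set.mem_iInter]
    intro e he
    obtain ⟨u, hu, v, hv, huv⟩ := hmem e (hSE (hS'S he))
    rw [Finset.mem_compl] at hv
    by_contra hX
    have hXt : G.X e ω = true := by simpa using hX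
    have hadj : (G.graph ω).Adj u v := by
      rw [DepRandomGraph.graph, SimpleGraph.fromEdgeSet_adj]
      refine ⟨⟨huv ▸ e.2, ?_⟩, fun h => hv (h ▸ hu)⟩
      have he2 : (⟨s(u, v), huv ▸ e.2⟩ : EdgeIdx n) = e := Subtype.ext huv.symm
      rw [he2]; exact hXt
    exact hω u hu v hv hadj
  have hindS' : ∀ a ∈ S', ∀ b ∈ S', a ≠ b → ¬ G.D.Adj a b :=
    fun a ha b hb => hSind a (hS'S ha) b (hS'S hb)
  have hofle : 1 - ENNReal.ofReal p ≤ ENNReal.ofReal (1 - p) := by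
    rcases le_or_gt 0 p with h0 | h0
    · rw [ENNReal.ofReal_sub 1 h0, ENNReal.ofReal_one]
    · rw [ENNReal.ofReal_eq_zero.2 h0.le, tsub_zero]
      exact ENNReal.one_le_ofReal.2 (by linarith)
  calc G.μ {ω | ∀ u ∈ A, ∀ v, v ∉ A → ¬ (G.graph ω).Adj u v}
      ≤ G.μ (⋂ e ∈ (S' : Set (EdgeIdx n)), {ω | G.X e ω = false}) := measure_mono hsub
    _ = ∏ e ∈ S', G.μ {ω | G.X e ω = false} := prod_indep G S' hindS'
    _ = (1 - ENNReal.ofReal p) ^ t := by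
        rw [Finset.prod_congr rfl (fun e _ => hμfalse e), Finset.prod_const, hS'card]
    _ ≤ (ENNReal.ofReal (1 - p)) ^ t := pow_le_pow_left₀ (zero_le) hofle t
    _ = ENNReal.ofReal ((1 - p) ^ t) := (ENNReal.ofReal_pow h1p t).symm

theorem not_connected_bound {n : ℕ} (hn : 2 ≤ n) {p : ℝ} {d : ℕ} (G : DepRandomGraph n p d) :
    G.μ {ω | ¬ (G.graph ω).Connected} ≤
      ENNReal.ofReal (∑ a ∈ Finset.Icc 1 (n / 2),
        (n.choose a : ℝ) * (1 - p) ^ ⌈((a * (n - a) : ℕ) : ℝ) / ((d : ℝ) + 1)⌉₊) := by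
  classical
  have h1p : p ≤ 1 := by
    have hnd : ¬ (s((⟨0, by omega⟩ : Fin n), (⟨1, by omega⟩ : Fin n)) : Sym2 (Fin n)).IsDiag := by
      rw [Sym2.mk_isDiag_iff]
      intro h
      exact absurd (congrArg Fin.val h) (by simp)
    have h1 := G.probX ⟨_, hnd⟩
    have h2 : G.μ {ω | G.X ⟨_, hnd⟩ ω = true} ≤ 1 := prob_le_one
    rw [h1] at h2
    exact ENNReal.ofReal_le_one.1 h2
  have h0p : (0:ℝ) ≤ 1 - p := by linarith
  set Bad : Finset (Fin n) → Set G.Ω :=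
    fun A => {ω | ∀ u ∈ A, ∀ v, v ∉ A → ¬ (G.graph ω).Adj u v} with hBad
  have hcover : {ω | ¬ (G.graph ω).Connected} ⊆
      ⋃ a ∈ (Finset.Icc 1 (n / 2) : Finset ℕ),
        ⋃ A ∈ Finset.powersetCard a (Finset.univ : Finset (Fin n)), Bad A := by
    intro ω hω
    obtain ⟨A, hA1, hA2, hAcut⟩ := exists_cut hn (G.graph ω) hω
    refine Set.mem_biUnion (Finset.mem_Icc.2 ⟨hA1, hA2⟩) ?_
    exact Set.mem_biUnion (Finset.mem_powersetCard.2 ⟨Finset.subset_univ A, rfl⟩) hAcut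
  calc G.μ {ω | ¬ (G.graph ω).Connected}
      ≤ G.μ (⋃ a ∈ (Finset.Icc 1 (n / 2) : Finset ℕ),
          ⋃ A ∈ Finset.powersetCard a (Finset.univ : Finset (Fin n)), Bad A) :=
        measure_mono hcover
    _ ≤ ∑ a ∈ Finset.Icc 1 (n / 2),
          G.μ (⋃ A ∈ Finset.powersetCard a (Finset.univ : Finset (Fin n)), Bad A) :=
        measure_biUnion_finset_le _ _
    _ ≤ ∑ a ∈ Finset.Icc 1 (n / 2),
          ∑ A ∈ Finset.powersetCard a (Finset.univ : Finset (Fin n)), G.μ (Bad A) :=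
        Finset.sum_le_sum (fun a _ => measure_biUnion_finset_le _ _)
    _ ≤ ∑ a ∈ Finset.Icc 1 (n / 2),
          ∑ _A ∈ Finset.powersetCard a (Finset.univ : Finset (Fin n)),
            ENNReal.ofReal ((1 - p) ^ ⌈((a * (n - a) : ℕ) : ℝ) / ((d : ℝ) + 1)⌉₊) := by
        refine Finset.sum_le_sum (fun a _ => Finset.sum_le_sum (fun A hA => ?_))
        have hcard : A.card = a := (Finset.mem_powersetCard.1 hA).2
        have := perA G h1p A
        rw [hcard] at this
        exact this
    _ = ∑ a ∈ Finset.Icc 1 (n / 2),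
          (n.choose a : ENNReal) *
            ENNReal.ofReal ((1 - p) ^ ⌈((a * (n - a) : ℕ) : ℝ) / ((d : ℝ) + 1)⌉₊) := by
        refine Finset.sum_congr rfl (fun a _ => ?_)
        rw [Finset.sum_const, Finset.card_powersetCard, Finset.card_univ, Fintype.card_fin,
          nsmul_eq_mul]
    _ = ENNReal.ofReal (∑ a ∈ Finset.Icc 1 (n / 2),
          (n.choose a : ℝ) * (1 - p) ^ ⌈((a * (n - a) : ℕ) : ℝ) / ((d : ℝ) + 1)⌉₊) := by
        rw [ENNReal.ofReal_sum_of_nonneg (fun a _ => by positivity)]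
        refine Finset.sum_congr rfl (fun a _ => ?_)
        rw [ENNReal.ofReal_mul (by positivity), ENNReal.ofReal_natCast]
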